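/- Let H be a finite group of odd order such that d(Z/2 × H) = 2. Then the nim-number of the achievement game GEN(Z/2 × H) is *0. -/

import Mathlib

universe u

namespace SetTheory

/-- Pre-games (removed from Mathlib; restored with the old definition). -/
inductive PGame : Type (u + 1)
  | mk : ∀ α β : Type u, (α → PGame) → (β → PGame) → PGame

namespace PGame

instance : Zero PGame :=
  ⟨⟨PEmpty, PEmpty, PEmpty.elim, PEmpty.elim⟩⟩

end PGame

end SetTheory

/-- Nimbers (removed from Mathlib; restored as a type synonym of `Ordinal`, as before). -/
def Nimber : Type (u + 1) :=
  Ordinal.{u}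

namespace Nimber

noncomputable instance : InfSet Nimber.{u} :=
  inferInstanceAs (InfSet Ordinal.{u})

end Nimber

/-- The identity map from ordinals to nimbers. -/
def Ordinal.toNimber : Ordinal.{u} → Nimber.{u} :=
  id

prefix:75 "∗" => Ordinal.toNimber

namespace SetTheory

namespace PGame

/-- The Grundy value: the minimum excluded value of the Grundy values of the left options. -/
noncomputable def grundyValue : PGame.{u} → Nimber.{u}
  | mk _ _ L _ => sInf (Set.range fun i => grundyValue (L i))ᶜ

end PGame

end SetTheory

open SetTheory Nimber
open scoped Classical

/-- The achievement game `GEN(G)` of Anderson and Harary: positions are (finite) subsets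
of the finite group `G`; a position that generates `G` is terminal, and otherwise the
options are obtained by selecting a previously-unselected element of `G`.  The game is
impartial, so the left and right options agree. -/
noncomputable def genGame {G : Type} [Group G] [Fintype G] (P : Finset G) : PGame :=
  if Subgroup.closure (P : Set G) = ⊤ then 0
  else
    PGame.mk {g : G // g ∉ P} {g : G // g ∉ P}
      (fun g => genGame (insert g.1 P)) (fun g => genGame (insert g.1 P))
termination_by Fintype.card G - P.card
decreasing_by
  all_goals
    have h1 : (insert g.1 P).card = P.card + 1 := Finset.card_insert_of_notMem g.2
    have h2 : (insert g.1 P).card ≤ Fintype.card G := Finset.card_le_univ _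
    omega

/-- The nim-number of the achievement game `GEN(G)`, i.e. the Sprague-Grundy value of the
starting position `∅`. -/
noncomputable def nimGEN (G : Type) [Group G] [Fintype G] : Nimber :=
  PGame.grundyValue (genGame (∅ : Finset G))

/-- `d(G)`: the minimal cardinality of a generating set of `G`. -/
noncomputable def minGen (G : Type) [Group G] : ℕ :=
  sInf {n : ℕ | ∃ S : Finset G, S.card = n ∧ Subgroup.closure (S : Set G) = ⊤}

namespace Nimber

noncomputable instance : ConditionallyCompleteLinearOrderBot Nimber.{u} :=
  inferInstanceAs (ConditionallyCompleteLinearOrderBot Ordinal.{u})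

instance : WellFoundedLT Nimber.{u} :=
  inferInstanceAs (WellFoundedLT Ordinal.{u})

noncomputable instance : Zero Nimber.{u} :=
  inferInstanceAs (Zero Ordinal.{u})

end Nimber

theorem Ordinal.toNimber_zero : ∗(0 : Ordinal.{u}) = (0 : Nimber.{u}) := rfl

namespace SetTheory

namespace PGame

def LeftMoves : PGame.{u} → Type u
  | mk l _ _ _ => l

def moveLeft : ∀ g : PGame.{u}, LeftMoves g → PGame.{u}
  | mk _ _ L _ => L

@[simp]
theorem moveLeft_mk {xl xr : Type u} {xL : xl → PGame.{u}} {xR : xr → PGame.{u}} :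
    (mk xl xr xL xR).moveLeft = xL := rfl

theorem grundyValue_le_of_forall_moveLeft {G : PGame.{u}} {o : Nimber.{u}}
    (h : ∀ i, grundyValue (G.moveLeft i) ≠ o) : grundyValue G ≤ o := by
  cases G with
  | mk a b L R =>
    rw [grundyValue]
    apply csInf_le'
    rintro ⟨i, hi⟩
    exact h i hi

theorem grundyValue_ne_moveLeft {G : PGame.{u}} (i : G.LeftMoves) :
    grundyValue (G.moveLeft i) ≠ grundyValue G := by
  cases G with
  | mk a b L R =>
    intro hc
    have hne : (Set.range fun i => grundyValue (L i))ᶜ.Nonempty :=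
      Ordinal.nonempty_compl_range.{u, u} _
    have hm := csInf_mem hne
    rw [grundyValue] at hc
    exact hm ⟨i, hc⟩

theorem grundyValue_zero : grundyValue (0 : PGame.{u}) = 0 := by
  show grundyValue (mk PEmpty PEmpty PEmpty.elim PEmpty.elim) = 0
  rw [grundyValue]
  have : (Set.range fun i : PEmpty => grundyValue (PEmpty.elim i : PGame.{u})) = ∅ :=
    Set.range_eq_empty _
  rw [this, Set.compl_empty, csInf_univ]
  rfl

end PGame

end SetTheory

section Aux

variable {H : Type} [Group H] [Fintype H]

local notation "GG" => Multiplicative (ZMod 2) × H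

noncomputable local instance (priority := 2000) : DecidableEq (Multiplicative (ZMod 2) × H) :=
  fun a b => Classical.propDecidable (a = b)

/-- If some move from a non-generating position has Grundy value `0`, the position
has nonzero Grundy value. -/
lemma grundy_ne_of_move {G : Type} [Group G] [Fintype G] {P : Finset G}
    (hP : Subgroup.closure (P : Set G) ≠ ⊤) {r : G} (hr : r ∉ P)
    (h0 : PGame.grundyValue (genGame (insert r P)) = 0) :
    PGame.grundyValue (genGame P) ≠ 0 := by
  rw [genGame, if_neg hP]
  intro hcontra
  have hne := PGame.grundyValue_ne_moveLeft
    (G := PGame.mk {g : G // g ∉ P} {g : G // g ∉ P}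
      (fun g => genGame (insert g.1 P)) (fun g => genGame (insert g.1 P))) ⟨r, hr⟩
  simp only [PGame.moveLeft_mk] at hne
  exact hne (h0.trans hcontra.symm)

/-- In `Z2 × H` with `|H|` odd, every subgroup splits componentwise. -/
lemma decomp (hH : Odd (Fintype.card H)) {S : Subgroup GG}
    {a : Multiplicative (ZMod 2)} {h : H} (hm : (a, h) ∈ S) :
    ((1 : Multiplicative (ZMod 2)), h) ∈ S ∧ (a, (1 : H)) ∈ S := by
  obtain ⟨m, hm'⟩ := hH
  have hsq : ∀ b : Multiplicative (ZMod 2), b ^ 2 = 1 := by decide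
  have h1 : ((a, h) : GG) ^ (Fintype.card H + 1) = (1, h) := by
    have hcard : Fintype.card H + 1 = 2 * (m + 1) := by omega
    ext
    · show a ^ (Fintype.card H + 1) = 1
      rw [hcard, pow_mul, hsq, one_pow]
    · show h ^ (Fintype.card H + 1) = h
      rw [pow_succ, pow_card_eq_one, one_mul]
  have hm1 : ((1 : Multiplicative (ZMod 2)), h) ∈ S := h1 ▸ pow_mem hm _
  refine ⟨hm1, ?_⟩
  have : ((a, h) : GG) * ((1 : Multiplicative (ZMod 2)), h)⁻¹ = (a, 1) := by
    ext <;> simp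
  exact this ▸ mul_mem hm (inv_mem hm1)

/-- A subgroup of `H` is deep if no single element extends it to all of `H`. -/
def Deep (K : Subgroup H) : Prop := ∀ h : H, K ⊔ Subgroup.closure {h} ≠ ⊤

/-- The projection to `H` of the subgroup generated by a position. -/
noncomputable def Kof (P : Finset GG) : Subgroup H :=
  Subgroup.map (MonoidHom.snd (Multiplicative (ZMod 2)) H) (Subgroup.closure (P : Set GG))

lemma Kof_insert (g : GG) (P : Finset GG) :
    Kof (insert g P) = Subgroup.closure {g.2} ⊔ Kof P := by
  unfold Kof
  rw [MonoidHom.map_closure, MonoidHom.map_closure, Finset.coe_insert,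
    Set.image_insert_eq, Set.insert_eq, Subgroup.closure_union]
  rfl

lemma Deep.ne_top {K : Subgroup H} (hK : Deep K) : K ≠ ⊤ := by
  have := hK 1
  simpa [Subgroup.closure_singleton_one] using this

lemma kof_top {P : Finset GG} (hP : Subgroup.closure (P : Set GG) = ⊤) : Kof P = ⊤ := by
  unfold Kof
  rw [hP]
  exact Subgroup.map_top_of_surjective _ Prod.snd_surjective

lemma closure_ne_top_of_kof {P : Finset GG} (hP : Kof P ≠ ⊤) :
    Subgroup.closure (P : Set GG) ≠ ⊤ := fun h => hP (kof_top h)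

/-- If the projection of `S` to `H` is everything and `S` contains an element with
nontrivial first coordinate, then `S = ⊤`. -/
lemma top_of (hH : Odd (Fintype.card H)) {S : Subgroup GG}
    (hmap : Subgroup.map (MonoidHom.snd (Multiplicative (ZMod 2)) H) S = ⊤)
    (hwit : ∃ h' : H, ((Multiplicative.ofAdd (1 : ZMod 2)), h') ∈ S) : S = ⊤ := by
  obtain ⟨h', hh'⟩ := hwit
  have hz : ((Multiplicative.ofAdd (1 : ZMod 2)), (1 : H)) ∈ S := (decomp hH hh').2
  rw [Subgroup.eq_top_iff']
  rintro ⟨a, h⟩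
  have : h ∈ Subgroup.map (MonoidHom.snd (Multiplicative (ZMod 2)) H) S := hmap ▸ trivial
  obtain ⟨p, hpS, hp⟩ := this
  have h1h : ((1 : Multiplicative (ZMod 2)), h) ∈ S := by
    have h2 := (decomp hH (show (p.1, p.2) ∈ S by simpa using hpS)).1
    rwa [show p.2 = h from hp] at h2
  have hcases : a = 1 ∨ a = Multiplicative.ofAdd (1 : ZMod 2) := by
    revert a; decide
  rcases hcases with rfl | rfl
  · exact h1h
  · have : ((Multiplicative.ofAdd (1 : ZMod 2)), (1 : H)) *
        ((1 : Multiplicative (ZMod 2)), h) = ((Multiplicative.ofAdd (1 : ZMod 2)), h) := by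
      ext <;> simp
    exact this ▸ mul_mem hz h1h

lemma main_lemma (hH : Odd (Fintype.card H)) :
    ∀ n (P : Finset GG), Fintype.card GG - P.card ≤ n → Deep (Kof P) → Even P.card →
      PGame.grundyValue (genGame P) = 0 := by
  intro n
  induction n with
  | zero =>
    intro P hn hdeep _
    exfalso
    have hcard : P.card = Fintype.card GG :=
      le_antisymm (Finset.card_le_univ _) (by omega)
    have : P = Finset.univ := Finset.eq_univ_of_card _ hcard
    subst this
    exact hdeep.ne_top (kof_top (by rw [Finset.coe_univ]; exact Subgroup.closure_univ))
  | succ n ih =>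
    intro P hn hdeep heven
    have hPtop : Subgroup.closure (P : Set GG) ≠ ⊤ := closure_ne_top_of_kof hdeep.ne_top
    rw [genGame, if_neg hPtop]
    refine le_antisymm (PGame.grundyValue_le_of_forall_moveLeft fun g => ?_)
      bot_le
    -- the opponent moves `g`; show the resulting position has nonzero Grundy value
    simp only [PGame.moveLeft_mk]
    set Q : Finset GG := insert g.1 P with hQ
    have hgP : g.1 ∉ P := g.2
    have hQcard : Q.card = P.card + 1 := Finset.card_insert_of_notMem hgP
    have hK' : Kof Q = Subgroup.closure {g.1.2} ⊔ Kof P := Kof_insert _ _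
    have hK'top : Kof Q ≠ ⊤ := by
      rw [hK', sup_comm]; exact hdeep g.1.2
    have hQtop : Subgroup.closure (Q : Set GG) ≠ ⊤ := closure_ne_top_of_kof hK'top
    -- it suffices to exhibit a response with Grundy value zero
    suffices hresp : ∃ r : GG, ∃ hr : r ∉ Q,
        PGame.grundyValue (genGame (insert r Q)) = 0 by
      obtain ⟨r, hr, hr0⟩ := hresp
      exact grundy_ne_of_move hQtop hr hr0
    by_cases hdK' : Deep (Kof Q)
    · by_cases hfull : ∃ h, h ∈ Subgroup.closure (Q : Set GG) ∧ h ∉ Q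
      · -- respond with an element of the closure: nothing changes
        obtain ⟨h, hhX, hhQ⟩ := hfull
        refine ⟨h, hhQ, ?_⟩
        have hcl : Subgroup.closure ((insert h Q : Finset GG) : Set GG) =
            Subgroup.closure (Q : Set GG) := by
          rw [Finset.coe_insert]
          refine le_antisymm ((Subgroup.closure_le _).2 (Set.insert_subset hhX
            Subgroup.subset_closure)) (Subgroup.closure_mono (Set.subset_insert _ _))
        have hcard2 : (insert h Q).card = P.card + 2 := by
          rw [Finset.card_insert_of_notMem hhQ, hQcard]
        refine ih (insert h Q) ?_ ?_ ?_
        · have := Finset.card_le_univ (insert h Q)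
          omega
        · show Deep (Kof (insert h Q))
          unfold Kof
          rw [hcl]
          exact hdK'
        · obtain ⟨k, hk⟩ := heven
          exact ⟨k + 1, by omega⟩
      · -- the position is a full subgroup of odd order: respond with the involution
        push_neg at hfull
        set z : GG := ((Multiplicative.ofAdd (1 : ZMod 2)), (1 : H)) with hz
        have hzQ : z ∉ Q := by
          intro hzmem
          -- then `Q` is (the carrier of) a subgroup containing an element of order 2
          have hQX : ((Subgroup.closure (Q : Set GG) : Set GG)) = (Q : Set GG) :=
            Set.Subset.antisymm (fun x hx => hfull x hx) Subgroup.subset_closure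
          have hzX : z ∈ Subgroup.closure (Q : Set GG) := Subgroup.subset_closure hzmem
          have hz1 : z ≠ 1 := fun hc => absurd (congrArg Prod.fst hc) (show Multiplicative.ofAdd (1 : ZMod 2) ≠ (1 : Multiplicative (ZMod 2)) by decide)
          have hzsq : z ^ 2 = 1 := by
            have h1 : z ^ 2 = (Multiplicative.ofAdd (1 : ZMod 2) ^ 2, (1 : H) ^ 2) := by
              rw [hz]; rfl
            rw [h1, show Multiplicative.ofAdd (1 : ZMod 2) ^ 2 = 1 by decide, one_pow]
            rfl
          have horder : orderOf (⟨z, hzX⟩ : Subgroup.closure (Q : Set GG)) = 2 := by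
            refine orderOf_eq_prime (Subtype.ext ?_) ?_
            · simpa using hzsq
            · intro hc; exact hz1 (congrArg Subtype.val hc)
          have hdvd := orderOf_dvd_natCard (⟨z, hzX⟩ : Subgroup.closure (Q : Set GG))
          rw [horder] at hdvd
          have hcardeq : Nat.card (Subgroup.closure (Q : Set GG)) = Q.card := by
            show Nat.card (↥((Subgroup.closure (Q : Set GG) : Set GG))) = Q.card
            rw [hQX]
            exact Nat.card_eq_finsetCard Q
          rw [hcardeq, hQcard] at hdvd
          obtain ⟨k, hk⟩ := heven
          omega
        refine ⟨z, hzQ, ?_⟩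
        have hKz : Kof (insert z Q) = Kof Q := by
          rw [Kof_insert]
          show Subgroup.closure {(1 : H)} ⊔ Kof Q = Kof Q
          rw [Subgroup.closure_singleton_one, bot_sup_eq]
        have hcard2 : (insert z Q).card = P.card + 2 := by
          rw [Finset.card_insert_of_notMem hzQ, hQcard]
        refine ih (insert z Q) ?_ (hKz ▸ hdK') ?_
        · have := Finset.card_le_univ (insert z Q)
          omega
        · obtain ⟨k, hk⟩ := heven
          exact ⟨k + 1, by omega⟩
    · -- the projection can be completed by one element: respond by generating everything
      have : ∃ h₀ : H, Kof Q ⊔ Subgroup.closure {h₀} = ⊤ := by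
        by_contra hc; push_neg at hc; exact hdK' hc
      obtain ⟨h₀, hh₀⟩ := this
      set r : GG := ((Multiplicative.ofAdd (1 : ZMod 2)), h₀) with hr
      have hrQ : r ∉ Q := by
        intro hrmem
        have : h₀ ∈ Kof Q :=
          ⟨r, Subgroup.subset_closure hrmem, rfl⟩
        have : Subgroup.closure {h₀} ≤ Kof Q := (Subgroup.closure_le _).2 (by
          simpa using this)
        exact hK'top (by rw [← hh₀, sup_eq_left.2 this])
      refine ⟨r, hrQ, ?_⟩
      have htop : Subgroup.closure ((insert r Q : Finset GG) : Set GG) = ⊤ := by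
        refine top_of hH ?_ ⟨h₀, Subgroup.subset_closure (by
          rw [Finset.coe_insert]; exact Set.mem_insert _ _)⟩
        rw [MonoidHom.map_closure, Finset.coe_insert, Set.image_insert_eq,
          Set.insert_eq, Subgroup.closure_union, sup_comm]
        have : Subgroup.closure ((MonoidHom.snd (Multiplicative (ZMod 2)) H) '' (Q : Set GG))
            = Kof Q := by
          unfold Kof; rw [MonoidHom.map_closure]
        rw [this]
        simpa using hh₀
      rw [genGame, if_pos htop]
      exact PGame.grundyValue_zero

end Aux

theorem nimGEN_Z2_times_odd (H : Type) [Group H] [Fintype H] (hH : Odd (Fintype.card H))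
    (hd : minGen (Multiplicative (ZMod 2) × H) = 2) :
    nimGEN (Multiplicative (ZMod 2) × H) = ∗0 := by
  have hdeep : Deep (Kof (∅ : Finset (Multiplicative (ZMod 2) × H))) := by
    intro h htop
    -- otherwise `(x, h)` would generate the whole group, contradicting `minGen = 2`
    have hK : Kof (∅ : Finset (Multiplicative (ZMod 2) × H)) = ⊥ := by
      unfold Kof
      rw [Finset.coe_empty, Subgroup.closure_empty]
      exact Subgroup.map_bot _
    rw [hK, bot_sup_eq] at htop
    set r : Multiplicative (ZMod 2) × H := ((Multiplicative.ofAdd (1 : ZMod 2)), h) with hr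
    have hgen : Subgroup.closure (({r} : Finset (Multiplicative (ZMod 2) × H)) :
        Set (Multiplicative (ZMod 2) × H)) = ⊤ := by
      refine top_of hH ?_ ⟨h, Subgroup.subset_closure (by simp [hr])⟩
      rw [MonoidHom.map_closure, Finset.coe_singleton, Set.image_singleton]
      exact htop
    have h1mem : 1 ∈ {n : ℕ | ∃ S : Finset (Multiplicative (ZMod 2) × H),
        S.card = n ∧ Subgroup.closure (S : Set (Multiplicative (ZMod 2) × H)) = ⊤} :=
      ⟨{r}, Finset.card_singleton r, hgen⟩
    have := Nat.sInf_le h1mem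
    rw [show sInf {n : ℕ | ∃ S : Finset (Multiplicative (ZMod 2) × H),
        S.card = n ∧ Subgroup.closure (S : Set (Multiplicative (ZMod 2) × H)) = ⊤}
      = minGen (Multiplicative (ZMod 2) × H) from rfl, hd] at this
    omega
  have h0 : PGame.grundyValue (genGame (∅ : Finset (Multiplicative (ZMod 2) × H))) = 0 :=
    main_lemma hH (Fintype.card (Multiplicative (ZMod 2) × H)) ∅ (by simp) hdeep (by simp)
  rw [nimGEN, h0]; exact Ordinal.toNimber_zero.symm
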